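/- The inclusion operator J : c → ℓ^∞ is completely quasi Levi but not σ-Levi: every norm-bounded increasing net in c has order-convergent image in ℓ^∞, yet for the bounded increasing sequence x_n = Σ_{k=1}^n e_{2k} in c there is no x ∈ c with J x_n order-converging to J x in ℓ^∞. -/

import Mathlib

/-- Order convergence of a net. -/
def OConvNet {ι F : Type*} [Preorder ι] [Lattice F] [AddCommGroup F]
    (x : ι → F) (x₀ : F) : Prop :=
  ∃ D : Set F, D.Nonempty ∧ DirectedOn (· ≥ ·) D ∧ IsGLB D 0 ∧
    ∀ y ∈ D, ∃ α₀, ∀ α, α₀ ≤ α → |x α - x₀| ≤ y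

/-- Order convergence of a sequence. -/
def OConvSeq {F : Type*} [Lattice F] [AddCommGroup F] (x : ℕ → F) (x₀ : F) : Prop :=
  ∃ y : ℕ → F, Antitone y ∧ IsGLB (Set.range y) 0 ∧
    ∀ m, ∃ n₀, ∀ n, n₀ ≤ n → |x n - x₀| ≤ y m

/-- A net is order-Cauchy if its double net of differences order converges to `0`. -/
def OCauchyNet {ι F : Type*} [Preorder ι] [Lattice F] [AddCommGroup F]
    (x : ι → F) : Prop :=
  OConvNet (fun p : ι × ι => x p.1 - x p.2) (0 : F)

/-- A sequence is order-Cauchy if its double sequence of differences order converges to `0`. -/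
def OCauchySeq' {F : Type*} [Lattice F] [AddCommGroup F] (x : ℕ → F) : Prop :=
  OConvNet (fun p : ℕ × ℕ => x p.1 - x p.2) (0 : F)

section Maps
variable {E F : Type*} [Lattice E] [AddCommGroup E] [Norm E] [Lattice F] [AddCommGroup F]

def IsLeviMap (T : E → F) : Prop :=
  ∀ (ι : Type) [Nonempty ι] [Preorder ι] [IsDirected ι (· ≤ ·)],
    ∀ x : ι → E, Monotone x → (∃ C, ∀ α, ‖x α‖ ≤ C) →
      ∃ x₀ : E, OConvNet (fun α => T (x α)) (T x₀)

def IsSigmaLeviMap (T : E → F) : Prop :=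
  ∀ x : ℕ → E, Monotone x → (∃ C, ∀ n, ‖x n‖ ≤ C) →
    ∃ x₀ : E, OConvSeq (fun n => T (x n)) (T x₀)

def IsCqLeviMap (T : E → F) : Prop :=
  ∀ (ι : Type) [Nonempty ι] [Preorder ι] [IsDirected ι (· ≤ ·)],
    ∀ x : ι → E, Monotone x → (∃ C, ∀ α, ‖x α‖ ≤ C) →
      ∃ y₀ : F, OConvNet (fun α => T (x α)) y₀

def IsCqSigmaLeviMap (T : E → F) : Prop :=
  ∀ x : ℕ → E, Monotone x → (∃ C, ∀ n, ‖x n‖ ≤ C) →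
    ∃ y₀ : F, OConvSeq (fun n => T (x n)) y₀

def IsQLeviMap (T : E → F) : Prop :=
  ∀ (ι : Type) [Nonempty ι] [Preorder ι] [IsDirected ι (· ≤ ·)],
    ∀ x : ι → E, Monotone x → (∃ C, ∀ α, ‖x α‖ ≤ C) →
      OCauchyNet (fun α => T (x α))

def IsQSigmaLeviMap (T : E → F) : Prop :=
  ∀ x : ℕ → E, Monotone x → (∃ C, ∀ n, ‖x n‖ ≤ C) →
    OCauchySeq' (fun n => T (x n))

end Maps

open Filter Topology

/-- The subspace `c` of convergent real sequences. -/
def cSub : Submodule ℝ (ℕ → ℝ) where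
  carrier := {x | ∃ l : ℝ, Tendsto x atTop (nhds l)}
  add_mem' := by rintro x y ⟨l, hl⟩ ⟨m, hm⟩; exact ⟨l + m, hl.add hm⟩
  zero_mem' := ⟨0, tendsto_const_nhds⟩
  smul_mem' := by rintro c x ⟨l, hl⟩; exact ⟨c * l, hl.const_mul c⟩

/-- The subspace `c₀` of real null sequences. -/
def c0Sub : Submodule ℝ (ℕ → ℝ) where
  carrier := {x | Tendsto x atTop (nhds 0)}
  add_mem' := by intro x y hx hy; have := hx.add hy; rw [zero_add] at this; exact this
  zero_mem' := tendsto_const_nhds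
  smul_mem' := by intro c x hx; have := hx.const_mul c; rw [mul_zero] at this; exact this

/-- The subspace `ℓ^∞` of bounded real sequences. -/
def LinfSub : Submodule ℝ (ℕ → ℝ) where
  carrier := {x | ∃ C : ℝ, ∀ n, |x n| ≤ C}
  add_mem' := by
    rintro x y ⟨C, hC⟩ ⟨D, hD⟩
    exact ⟨C + D, fun n => (abs_add_le _ _).trans (add_le_add (hC n) (hD n))⟩
  zero_mem' := ⟨0, fun n => by simp⟩
  smul_mem' := by
    rintro c x ⟨C, hC⟩
    exact ⟨|c| * C, fun n => by
      simpa [abs_mul] using mul_le_mul_of_nonneg_left (hC n) (abs_nonneg c)⟩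

instance : Lattice cSub :=
  { (inferInstance : PartialOrder cSub) with
    sup := fun x y => ⟨x.1 ⊔ y.1, by
      obtain ⟨l, hl⟩ := x.2; obtain ⟨m, hm⟩ := y.2; exact ⟨l ⊔ m, hl.max hm⟩⟩
    inf := fun x y => ⟨x.1 ⊓ y.1, by
      obtain ⟨l, hl⟩ := x.2; obtain ⟨m, hm⟩ := y.2; exact ⟨l ⊓ m, hl.min hm⟩⟩
    le_sup_left := fun a b => (le_sup_left : a.1 ≤ a.1 ⊔ b.1)
    le_sup_right := fun a b => (le_sup_right : b.1 ≤ a.1 ⊔ b.1)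
    sup_le := fun a b c h₁ h₂ => (sup_le h₁ h₂ : a.1 ⊔ b.1 ≤ c.1)
    inf_le_left := fun a b => (inf_le_left : a.1 ⊓ b.1 ≤ a.1)
    inf_le_right := fun a b => (inf_le_right : a.1 ⊓ b.1 ≤ b.1)
    le_inf := fun a b c h₁ h₂ => (le_inf h₁ h₂ : a.1 ≤ b.1 ⊓ c.1) }

instance : Lattice c0Sub :=
  { (inferInstance : PartialOrder c0Sub) with
    sup := fun x y => ⟨x.1 ⊔ y.1, by
      have := x.2.max y.2; rw [max_self] at this; exact this⟩
    inf := fun x y => ⟨x.1 ⊓ y.1, by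
      have := x.2.min y.2; rw [min_self] at this; exact this⟩
    le_sup_left := fun a b => (le_sup_left : a.1 ≤ a.1 ⊔ b.1)
    le_sup_right := fun a b => (le_sup_right : b.1 ≤ a.1 ⊔ b.1)
    sup_le := fun a b c h₁ h₂ => (sup_le h₁ h₂ : a.1 ⊔ b.1 ≤ c.1)
    inf_le_left := fun a b => (inf_le_left : a.1 ⊓ b.1 ≤ a.1)
    inf_le_right := fun a b => (inf_le_right : a.1 ⊓ b.1 ≤ b.1)
    le_inf := fun a b c h₁ h₂ => (le_inf h₁ h₂ : a.1 ≤ b.1 ⊓ c.1) }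

instance : Lattice LinfSub :=
  { (inferInstance : PartialOrder LinfSub) with
    sup := fun x y => ⟨x.1 ⊔ y.1, by
      obtain ⟨C, hC⟩ := x.2; obtain ⟨D, hD⟩ := y.2
      exact ⟨C ⊔ D, fun n => by
        have h1 := hC n; have h2 := hD n
        simp only [Pi.sup_apply]
        rcases le_total (x.1 n) (y.1 n) with h | h
        · rw [sup_eq_right.2 h]; exact h2.trans le_sup_right
        · rw [sup_eq_left.2 h]; exact h1.trans le_sup_left⟩⟩
    inf := fun x y => ⟨x.1 ⊓ y.1, by
      obtain ⟨C, hC⟩ := x.2; obtain ⟨D, hD⟩ := y.2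
      exact ⟨C ⊔ D, fun n => by
        have h1 := hC n; have h2 := hD n
        simp only [Pi.inf_apply]
        rcases le_total (x.1 n) (y.1 n) with h | h
        · rw [inf_eq_left.2 h]; exact h1.trans le_sup_left
        · rw [inf_eq_right.2 h]; exact h2.trans le_sup_right⟩⟩
    le_sup_left := fun a b => (le_sup_left : a.1 ≤ a.1 ⊔ b.1)
    le_sup_right := fun a b => (le_sup_right : b.1 ≤ a.1 ⊔ b.1)
    sup_le := fun a b c h₁ h₂ => (sup_le h₁ h₂ : a.1 ⊔ b.1 ≤ c.1)
    inf_le_left := fun a b => (inf_le_left : a.1 ⊓ b.1 ≤ a.1)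
    inf_le_right := fun a b => (inf_le_right : a.1 ⊓ b.1 ≤ b.1)
    le_inf := fun a b c h₁ h₂ => (le_inf h₁ h₂ : a.1 ≤ b.1 ⊓ c.1) }

noncomputable instance : Norm cSub := ⟨fun x => ⨆ n, |x.1 n|⟩
noncomputable instance : Norm c0Sub := ⟨fun x => ⨆ n, |x.1 n|⟩
noncomputable instance : Norm LinfSub := ⟨fun x => ⨆ n, |x.1 n|⟩

/-- The sequence `x n = ∑_{k=1}^n e_{2k}` (in 0-based indexing, the indicator of the odd
positions below `2n`), as an element of `c`. -/
def xEven (n : ℕ) : cSub :=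
  ⟨fun j => if Odd j ∧ j < 2 * n then 1 else 0, by
    refine ⟨0, tendsto_atTop_of_eventually_const (i₀ := 2 * n) fun j hj => ?_⟩
    simp only [ite_eq_right_iff, and_imp]
    intro _ hlt
    omega⟩


/- ### Auxiliary lemmas -/

lemma linf_abs_apply (w : LinfSub) (j : ℕ) : (|w|).1 j = |w.1 j| := rfl

lemma cSub_abs_le_norm (a : cSub) (n : ℕ) : |a.1 n| ≤ ‖a‖ := by
  obtain ⟨l, hl⟩ := a.2
  exact le_ciSup hl.abs.bddAbove_range n

lemma xEven_monotone : Monotone xEven := by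
  intro n m h
  show (xEven n).1 ≤ (xEven m).1
  intro j
  show (if Odd j ∧ j < 2 * n then (1:ℝ) else 0) ≤ (if Odd j ∧ j < 2 * m then (1:ℝ) else 0)
  by_cases h1 : Odd j ∧ j < 2 * n
  · rw [if_pos h1, if_pos ⟨h1.1, by omega⟩]
  · rw [if_neg h1]; split <;> norm_num

lemma xEven_norm_le (n : ℕ) : ‖xEven n‖ ≤ 1 := by
  refine ciSup_le fun j => ?_
  show |if Odd j ∧ j < 2 * n then (1:ℝ) else 0| ≤ 1
  split <;> norm_num

/-- the inclusion `J : c → ℓ^∞` is completely quasi Levi but not σ-Levi;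
in particular, for the bounded increasing sequence `x n = ∑_{k=1}^n e_{2k}` of `c` there
is no `x ∈ c` with `J (x n)` order converging to `J x` in `ℓ^∞`. -/
theorem inclusion_c_linf_cqLevi_not_sigmaLevi
    (J : cSub → LinfSub) (hJ : ∀ a : cSub, (J a).1 = a.1) :
    IsCqLeviMap J ∧ ¬ IsSigmaLeviMap J ∧
    ¬ ∃ x : cSub, OConvSeq (fun n => J (xEven n)) (J x) := by
  
  have key : ¬ ∃ x : cSub, OConvSeq (fun n => J (xEven n)) (J x) := by
    rintro ⟨x, y, -, hglb, hbound⟩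
    set t : ℕ → ℝ := fun j => if Odd j then 1 else 0 with ht
    have hy0 : ∀ m, (0 : LinfSub) ≤ y m := fun m => hglb.1 ⟨m, rfl⟩
    have hx : x.1 = t := by
      funext j
      have hkey : ∀ m, |t j - x.1 j| ≤ (y m).1 j := by
        intro m
        obtain ⟨n₀, hn₀⟩ := hbound m
        have h := hn₀ (max n₀ (j + 1)) (le_max_left _ _)
        have h2 : (|J (xEven (max n₀ (j + 1))) - J x|).1 j ≤ (y m).1 j := h j
        rw [linf_abs_apply] at h2
        have h3 : (J (xEven (max n₀ (j + 1))) - J x).1 j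
            = (xEven (max n₀ (j + 1))).1 j - x.1 j := by
          show (J (xEven (max n₀ (j + 1)))).1 j - (J x).1 j = _
          rw [hJ, hJ]
        rw [h3] at h2
        have hje : (xEven (max n₀ (j + 1))).1 j = t j := by
          show (if Odd j ∧ j < 2 * max n₀ (j + 1) then (1:ℝ) else 0)
              = if Odd j then (1:ℝ) else 0
          have hlt : j < 2 * max n₀ (j + 1) := by
            have := le_max_right n₀ (j + 1); omega
          by_cases ho : Odd j <;> simp [ho, hlt]
        rwa [hje] at h2
      set a : ℝ := |t j - x.1 j| with ha
      set b : LinfSub := ⟨fun i => if i = j then a else 0, ⟨|a|, fun i => by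
        dsimp only; split <;> simp [abs_nonneg]⟩⟩ with hb
      have hblb : b ∈ lowerBounds (Set.range y) := by
        rintro _ ⟨m, rfl⟩
        show b.1 ≤ (y m).1
        intro i
        show (if i = j then a else 0) ≤ (y m).1 i
        split
        · next h => subst h; exact hkey m
        · exact hy0 m i
      have hb0 : b ≤ 0 := hglb.2 hblb
      have ha0 : a ≤ 0 := by
        have h4 : b.1 j ≤ (0 : LinfSub).1 j := hb0 j
        simpa [hb] using h4
      have haz : a = 0 := le_antisymm ha0 (abs_nonneg _)
      have := sub_eq_zero.1 (abs_eq_zero.1 haz)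
      linarith
    obtain ⟨l, hl⟩ := x.2
    rw [hx] at hl
    have hsm0 : StrictMono (fun n : ℕ => 2 * n) := fun p q h => by dsimp only; omega
    have hsm1 : StrictMono (fun n : ℕ => 2 * n + 1) := fun p q h => by dsimp only; omega
    have h0 : Tendsto (fun n : ℕ => t (2 * n)) atTop (nhds l) :=
      hl.comp hsm0.tendsto_atTop
    have h1 : Tendsto (fun n : ℕ => t (2 * n + 1)) atTop (nhds l) :=
      hl.comp hsm1.tendsto_atTop
    have e0 : (fun n : ℕ => t (2 * n)) = fun _ => (0 : ℝ) := by
      funext n; show (if Odd (2 * n) then (1:ℝ) else 0) = 0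
      rw [if_neg (by rw [Nat.odd_iff]; omega)]
    have e1 : (fun n : ℕ => t (2 * n + 1)) = fun _ => (1 : ℝ) := by
      funext n; show (if Odd (2 * n + 1) then (1:ℝ) else 0) = 1
      rw [if_pos ⟨n, by ring⟩]
    rw [e0] at h0; rw [e1] at h1
    have hl0 : l = 0 := tendsto_nhds_unique h0 tendsto_const_nhds
    have hl1 : l = 1 := tendsto_nhds_unique h1 tendsto_const_nhds
    rw [hl0] at hl1; norm_num at hl1
  refine ⟨?_, fun h => key ?_, key⟩
  · intro ι _ _ _ x hmono hC
    obtain ⟨C, hC⟩ := hC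
    obtain ⟨α₀⟩ := ‹Nonempty ι›
    have hbd : ∀ α n, |(x α).1 n| ≤ C := fun α n => (cSub_abs_le_norm (x α) n).trans (hC α)
    have hbA : ∀ j, BddAbove (Set.range fun α => (x α).1 j) := fun j =>
      ⟨C, by rintro _ ⟨α, rfl⟩; exact (abs_le.1 (hbd α j)).2⟩
    set f : ℕ → ℝ := fun j => ⨆ α, (x α).1 j with hf
    have hfmem : f ∈ LinfSub := by
      refine ⟨C, fun j => abs_le.2 ⟨?_, ciSup_le fun α => (abs_le.1 (hbd α j)).2⟩⟩
      exact le_trans (abs_le.1 (hbd α₀ j)).1 (le_ciSup (hbA j) α₀)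
    set y₀ : LinfSub := ⟨f, hfmem⟩ with hy₀
    have hcoord : ∀ (α : ι) (j : ℕ), (x α).1 j ≤ f j := fun α j => le_ciSup (hbA j) α
    refine ⟨y₀, Set.range fun α => y₀ - J (x α), ⟨_, ⟨α₀, rfl⟩⟩, ?_, ⟨?_, ?_⟩, ?_⟩
    · rintro _ ⟨α, rfl⟩ _ ⟨β, rfl⟩
      obtain ⟨γ, hγα, hγβ⟩ := directed_of (· ≤ ·) α β
      have hsub : ∀ {δ ε : ι}, δ ≤ ε → y₀ - J (x ε) ≤ y₀ - J (x δ) := by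
        intro δ ε h
        show (y₀ - J (x ε)).1 ≤ (y₀ - J (x δ)).1
        intro j
        show f j - (J (x ε)).1 j ≤ f j - (J (x δ)).1 j
        rw [hJ, hJ]
        exact sub_le_sub_left (hmono h j) _
      exact ⟨y₀ - J (x γ), ⟨γ, rfl⟩, hsub hγα, hsub hγβ⟩
    · rintro _ ⟨α, rfl⟩
      show (0 : LinfSub).1 ≤ (y₀ - J (x α)).1
      intro j
      show (0 : ℝ) ≤ f j - (J (x α)).1 j
      rw [hJ]
      exact sub_nonneg.2 (hcoord α j)
    · intro b hb
      show b.1 ≤ (0 : LinfSub).1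
      intro j
      show b.1 j ≤ 0
      have hbj : ∀ α : ι, (x α).1 j ≤ f j - b.1 j := by
        intro α
        have h' : b.1 j ≤ f j - (J (x α)).1 j := hb ⟨α, rfl⟩ j
        rw [hJ] at h'
        linarith
      have hff : f j ≤ f j - b.1 j := ciSup_le hbj
      linarith
    · rintro _ ⟨β, rfl⟩
      refine ⟨β, fun α hα => ?_⟩
      show (|J (x α) - y₀|).1 ≤ (y₀ - J (x β)).1
      intro j
      rw [linf_abs_apply]
      show |(J (x α)).1 j - f j| ≤ f j - (J (x β)).1 j
      rw [hJ, hJ, abs_sub_comm, abs_of_nonneg (sub_nonneg.2 (hcoord α j))]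
      exact sub_le_sub_left (hmono hα j) _
  · exact h xEven xEven_monotone ⟨1, xEven_norm_le⟩
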